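/- SO(3) acts freely on the open set {z ∈ ℂ³ : ‖z‖² > |z·z|}: if g ∈ SO(3) and z ∈ ℂ³ satisfy ‖z‖² > |z·z| and g·z = z, then g is the identity matrix. -/

import Mathlib

open scoped BigOperators
open Matrix

lemma mulVec_cross (g : Matrix (Fin 3) (Fin 3) ℝ)
    (horth : g * g.transpose = 1) (hdet : g.det = 1) (u v : Fin 3 → ℝ) :
    g.mulVec (crossProduct u v) = crossProduct (g.mulVec u) (g.mulVec v) := by
  have key : g.transpose.mulVec (crossProduct (g.mulVec u) (g.mulVec v))
      = crossProduct u v := by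
    funext i
    have h1 : g.transpose.mulVec (crossProduct (g.mulVec u) (g.mulVec v)) i
        = (g.mulVec (Pi.single i 1)) ⬝ᵥ (crossProduct (g.mulVec u) (g.mulVec v)) := by
      fin_cases i <;>
        simp [Matrix.mulVec, dotProduct, Matrix.transpose, Fin.sum_univ_three,
          Pi.single_apply] <;> ring_nf
    have hmat : (![g.mulVec (Pi.single i 1), g.mulVec u, g.mulVec v])
        = Matrix.of ![Pi.single i 1, u, v] * g.transpose := by
      ext a b
      fin_cases a <;> simp [Matrix.mul_apply, Matrix.mulVec, dotProduct,
        Matrix.transpose, Matrix.of_apply, mul_comm, Pi.single_apply, Finset.sum_ite_eq']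
    rw [h1, triple_product_eq_det, hmat, Matrix.det_mul, Matrix.det_transpose, hdet, mul_one]
    fin_cases i <;>
      simp [Matrix.det_fin_three, crossProduct, Pi.single_apply, Matrix.of_apply] <;> ring
  calc g.mulVec (crossProduct u v)
      = g.mulVec (g.transpose.mulVec (crossProduct (g.mulVec u) (g.mulVec v))) := by rw [key]
    _ = crossProduct (g.mulVec u) (g.mulVec v) := by
        rw [Matrix.mulVec_mulVec, horth, Matrix.one_mulVec]

theorem so3_acts_freely (g : Matrix (Fin 3) (Fin 3) ℝ)
    (horth : g * g.transpose = 1) (hdet : g.det = 1)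
    (z : Fin 3 → ℂ)
    (hz : ‖∑ i, z i * z i‖ < ∑ i, ‖z i‖ ^ 2)
    (hfix : (g.map (fun r => (r : ℂ))).mulVec z = z) :
    g = 1 := by
  set x : Fin 3 → ℝ := fun i => (z i).re with hx
  set y : Fin 3 → ℝ := fun i => (z i).im with hy
  have hgx : g.mulVec x = x := by
    funext i
    have h := congrFun hfix i
    simp [Matrix.mulVec, dotProduct, Matrix.map, Fin.sum_univ_three] at h
    have hre := congrArg Complex.re h
    simp [Complex.re_ofReal_mul] at hre
    simpa [Matrix.mulVec, dotProduct, Fin.sum_univ_three, hx] using hre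
  have hgy : g.mulVec y = y := by
    funext i
    have h := congrFun hfix i
    simp [Matrix.mulVec, dotProduct, Matrix.map, Fin.sum_univ_three] at h
    have him := congrArg Complex.im h
    simp [Complex.im_ofReal_mul] at him
    simpa [Matrix.mulVec, dotProduct, Fin.sum_univ_three, hy] using him
  set w : Fin 3 → ℝ := crossProduct x y with hw
  have hgw : g.mulVec w = w := by
    rw [hw, mulVec_cross g horth hdet, hgx, hgy]
  set a : ℝ := ∑ i, x i ^ 2 with ha
  set b : ℝ := ∑ i, y i ^ 2 with hb
  set c : ℝ := ∑ i, x i * y i with hc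
  have hzz : (∑ i, z i * z i) = Complex.mk (a - b) (2 * c) := by
    apply Complex.ext <;>
      simp [Fin.sum_univ_three, ha, hb, hc, hx, hy, Complex.mul_re, Complex.mul_im] <;> ring
  have hrhs : (∑ i, ‖z i‖ ^ 2) = a + b := by
    simp [Fin.sum_univ_three, ha, hb, hx, hy, Complex.sq_norm, Complex.normSq_apply]
    ring
  have hnorm : ((a - b) ^ 2 + (2 * c) ^ 2) < (a + b) ^ 2 := by
    rw [hzz, hrhs] at hz
    have h0 : (0:ℝ) ≤ ‖Complex.mk (a - b) (2 * c)‖ := norm_nonneg _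
    have hsq : ‖Complex.mk (a - b) (2 * c)‖ ^ 2 = (a - b) ^ 2 + (2 * c) ^ 2 := by
      rw [Complex.sq_norm, Complex.normSq_mk]; ring
    nlinarith [hz, h0, hsq]
  have hcab : c ^ 2 < a * b := by nlinarith
  have hww : 0 < w ⬝ᵥ w := by
    have : w ⬝ᵥ w = a * b - c ^ 2 := by
      simp [hw, ha, hb, hc, crossProduct, dotProduct, Fin.sum_univ_three]
      ring
    rw [this]; linarith
  set M : Matrix (Fin 3) (Fin 3) ℝ := (Matrix.of ![w, x, y]).transpose with hM
  have hdetM : M.det ≠ 0 := by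
    have hMdet : M.det = w ⬝ᵥ w := by
      have h2 : w ⬝ᵥ crossProduct x y = Matrix.det ![w, x, y] := triple_product_eq_det w x y
      rw [hM, Matrix.det_transpose, ← hw] at *
      exact h2.symm
    rw [hMdet]; exact ne_of_gt hww
  have hfixcol : ∀ v : Fin 3 → ℝ, g.mulVec v = v → ∀ i, (∑ k, g i k * v k) = v i := by
    intro v hv i
    have := congrFun hv i
    simpa [Matrix.mulVec, dotProduct] using this
  have hrow : ∀ j, g.mulVec (Matrix.of ![w, x, y] j) = Matrix.of ![w, x, y] j := by
    intro j
    fin_cases j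
    · exact hgw
    · exact hgx
    · exact hgy
  have hNg : Matrix.of ![w, x, y] * g.transpose = Matrix.of ![w, x, y] := by
    ext j k
    rw [Matrix.mul_apply]
    have h := congrFun (hrow j) k
    simpa [Matrix.mulVec, dotProduct, Matrix.transpose_apply, mul_comm] using h
  have hgM : g * M = M := by
    have h := congrArg Matrix.transpose hNg
    rwa [Matrix.transpose_mul, Matrix.transpose_transpose, ← hM] at h
  have hMinv : IsUnit M.det := isUnit_iff_ne_zero.mpr hdetM
  calc g = g * (M * M⁻¹) := by rw [Matrix.mul_nonsing_inv M hMinv, mul_one]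
    _ = (g * M) * M⁻¹ := by rw [mul_assoc]
    _ = M * M⁻¹ := by rw [hgM]
    _ = 1 := Matrix.mul_nonsing_inv M hMinv
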